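/- Let u be a degree-two vertex in a finite simple graph G with neighbors v and w that are adjacent, and suppose v and w have no common neighbor other than u. Then {u, v, w} is a maximal clique of G, and moreover {v, w} is not contained in any clique of G - u of size ≥ 3; hence the maximal cliques of size ≥ 2 of G are exactly {u,v,w} together with the maximal cliques of size ≥ 2 of the graph obtained from G by deleting u and the edge (v,w). -/

import Mathlib

open SimpleGraph

/-- A maximal clique: a clique not properly contained in any other clique. -/
def MaximalClique {V : Type*} (G : SimpleGraph V) (S : Set V) : Prop :=
  G.IsClique S ∧ ∀ T : Set V, G.IsClique T → S ⊆ T → S = T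

/-- The graph obtained from `G` by deleting vertex `u` (removing all its incident edges). -/
def delVert {V : Type*} (G : SimpleGraph V) (u : V) : SimpleGraph V where
  Adj a b := G.Adj a b ∧ a ≠ u ∧ b ≠ u
  symm := by constructor; intro a b h; exact ⟨h.1.symm, h.2.2, h.2.1⟩
  loopless := by constructor; intro a h; exact h.1.ne rfl

theorem stmt_3 {V : Type*} [Fintype V] (G : SimpleGraph V) (u v w : V)
    (hvw : v ≠ w) (hu : G.neighborSet u = {v, w}) (hadj : G.Adj v w)
    (hcn : G.neighborSet v ∩ G.neighborSet w = {u}) :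
    MaximalClique G {u, v, w} ∧
    (∀ S : Set V, (delVert G u).IsClique S → v ∈ S → w ∈ S → ¬ 3 ≤ S.ncard) ∧
    {S : Set V | MaximalClique G S ∧ 2 ≤ S.ncard} =
      insert {u, v, w}
        {S : Set V |
          MaximalClique ((delVert G u).deleteEdges {s(v, w)}) S ∧ 2 ≤ S.ncard} := by
  have huv : G.Adj u v := by
    have hm : v ∈ G.neighborSet u := by rw [hu]; left; rfl
    exact hm
  have huw : G.Adj u w := by
    have hm : w ∈ G.neighborSet u := by rw [hu]; right; rfl
    exact hm
  have hadju : ∀ x, G.Adj u x → x = v ∨ x = w := by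
    intro x hx
    have hm : x ∈ G.neighborSet u := hx
    rw [hu] at hm; exact hm
  have hcom : ∀ x, G.Adj v x → G.Adj w x → x = u := by
    intro x h1 h2
    have hm : x ∈ G.neighborSet v ∩ G.neighborSet w := ⟨h1, h2⟩
    rw [hcn] at hm; exact hm
  have huv' : u ≠ v := huv.ne
  have huw' : u ≠ w := huw.ne
  -- adjacency in the modified graph
  set G' := (delVert G u).deleteEdges {s(v, w)} with hG'def
  have hG' : ∀ a b, G'.Adj a b ↔
      G.Adj a b ∧ a ≠ u ∧ b ≠ u ∧ ¬((a = v ∧ b = w) ∨ (a = w ∧ b = v)) := by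
    intro a b
    rw [hG'def, SimpleGraph.deleteEdges_adj]
    constructor
    · rintro ⟨⟨h1, h2, h3⟩, h4⟩
      refine ⟨h1, h2, h3, ?_⟩
      intro h
      apply h4
      simp only [Set.mem_singleton_iff, Sym2.eq_iff]
      tauto
    · rintro ⟨h1, h2, h3, h4⟩
      refine ⟨⟨h1, h2, h3⟩, ?_⟩
      simp only [Set.mem_singleton_iff, Sym2.eq_iff]
      tauto
  have hclq : G.IsClique {u, v, w} := by
    intro a ha b hb hab
    simp only [Set.mem_insert_iff, Set.mem_singleton_iff] at ha hb
    rcases ha with rfl | rfl | rfl <;> rcases hb with rfl | rfl | rfl <;>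
      first
        | exact absurd rfl hab
        | exact huv | exact huw | exact hadj
        | exact huv.symm | exact huw.symm | exact hadj.symm
  have hmax : MaximalClique G {u, v, w} := by
    refine ⟨hclq, ?_⟩
    intro T hT hsub
    apply Set.Subset.antisymm hsub
    intro x hxT
    by_contra hx
    simp only [Set.mem_insert_iff, Set.mem_singleton_iff, not_or] at hx
    have hxu : G.Adj u x := hT (hsub (by left; rfl)) hxT (Ne.symm hx.1)
    rcases hadju x hxu with rfl | rfl
    · exact hx.2.1 rfl
    · exact hx.2.2 rfl
  have part2 : ∀ S : Set V, (delVert G u).IsClique S → v ∈ S → w ∈ S → ¬ 3 ≤ S.ncard := by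
    intro S hS hv hw h3
    have hsub : ({v, w} : Set V) ⊆ S := by
      intro x hx
      rcases hx with rfl | hx
      · exact hv
      · rw [Set.mem_singleton_iff] at hx; subst hx; exact hw
    have hne : ({v, w} : Set V) ≠ S := by
      intro h
      have h2 : S.ncard = 2 := by rw [← h]; exact Set.ncard_pair hvw
      omega
    obtain ⟨x, hxS, hx⟩ :=
      Set.exists_of_ssubset ⟨hsub, fun h => hne (Set.Subset.antisymm hsub h)⟩
    simp only [Set.mem_insert_iff, Set.mem_singleton_iff, not_or] at hx
    have h1 : (delVert G u).Adj v x := hS hv hxS (Ne.symm hx.1)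
    have h2 : (delVert G u).Adj w x := hS hw hxS (Ne.symm hx.2)
    exact h1.2.2 (hcom x h1.1 h2.1)
  refine ⟨hmax, part2, ?_⟩
  ext S
  simp only [Set.mem_setOf_eq, Set.mem_insert_iff]
  constructor
  · rintro ⟨⟨hS, hSmax⟩, h2⟩
    by_cases hUS : u ∈ S
    · left
      apply hSmax {u, v, w} hclq
      intro x hxS
      by_cases hxu : x = u
      · left; exact hxu
      · have hux : G.Adj u x := hS hUS hxS (Ne.symm hxu)
        rcases hadju x hux with rfl | rfl
        · right; left; rfl
        · right; right; rfl
    · right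
      have hnotboth : ¬(v ∈ S ∧ w ∈ S) := by
        rintro ⟨hvS, hwS⟩
        have hsub : S ⊆ {u, v, w} := by
          intro x hxS
          by_cases hxv : x = v
          · right; left; exact hxv
          by_cases hxw : x = w
          · right; right; exact hxw
          have h1 : G.Adj v x := hS hvS hxS (Ne.symm hxv)
          have h2 : G.Adj w x := hS hwS hxS (Ne.symm hxw)
          left; exact hcom x h1 h2
        have := hSmax {u, v, w} hclq hsub
        exact hUS (this ▸ (by left; rfl : u ∈ ({u, v, w} : Set V)))
      have hSclq' : G'.IsClique S := by
        intro a haS b hbS hab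
        rw [hG']
        refine ⟨hS haS hbS hab, ?_, ?_, ?_⟩
        · intro h; exact hUS (h ▸ haS)
        · intro h; exact hUS (h ▸ hbS)
        · rintro (⟨rfl, rfl⟩ | ⟨rfl, rfl⟩)
          · exact hnotboth ⟨haS, hbS⟩
          · exact hnotboth ⟨hbS, haS⟩
      refine ⟨⟨hSclq', ?_⟩, h2⟩
      intro T hT hsub
      apply hSmax T _ hsub
      intro a haT b hbT hab
      exact ((hG' a b).mp (hT haT hbT hab)).1
  · rintro (rfl | ⟨⟨hS, hSmax⟩, h2⟩)
    · refine ⟨hmax, ?_⟩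
      have h3 : ({u, v, w} : Set V).ncard = 3 := by
        rw [Set.ncard_insert_of_notMem (by simp [huv', huw']), Set.ncard_pair hvw]
      omega
    · -- S is a maximal clique of G' with ncard ≥ 2
      obtain ⟨a, b, haS, hbS, hab⟩ := (Set.one_lt_ncard_iff (Set.toFinite S)).mp (by omega)
      have habAdj := (hG' a b).mp (hS haS hbS hab)
      have hSclq : G.IsClique S := by
        intro x hx y hy hxy
        exact ((hG' x y).mp (hS hx hy hxy)).1
      refine ⟨⟨hSclq, ?_⟩, h2⟩
      intro T hT hsub
      have hUT : u ∉ T := by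
        intro hUT
        have h1 : G.Adj u a := hT hUT (hsub haS) (Ne.symm habAdj.2.1)
        have h2 : G.Adj u b := hT hUT (hsub hbS) (Ne.symm habAdj.2.2.1)
        rcases hadju a h1 with rfl | rfl <;> rcases hadju b h2 with rfl | rfl
        · exact hab rfl
        · exact habAdj.2.2.2 (Or.inl ⟨rfl, rfl⟩)
        · exact habAdj.2.2.2 (Or.inr ⟨rfl, rfl⟩)
        · exact hab rfl
      have hnotboth : ¬(v ∈ T ∧ w ∈ T) := by
        rintro ⟨hvT, hwT⟩
        have hTsub : T ⊆ {v, w} := by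
          intro x hxT
          by_cases hxv : x = v
          · left; exact hxv
          by_cases hxw : x = w
          · right; exact hxw
          have h1 : G.Adj v x := hT hvT hxT (Ne.symm hxv)
          have h2 : G.Adj w x := hT hwT hxT (Ne.symm hxw)
          exact absurd (hcom x h1 h2 ▸ hxT) hUT
        have haVW := hTsub (hsub haS)
        have hbVW := hTsub (hsub hbS)
        rcases haVW with rfl | haVW <;> rcases hbVW with rfl | hbVW
        · exact hab rfl
        · rw [Set.mem_singleton_iff] at hbVW; subst hbVW
          exact habAdj.2.2.2 (Or.inl ⟨rfl, rfl⟩)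
        · rw [Set.mem_singleton_iff] at haVW; subst haVW
          exact habAdj.2.2.2 (Or.inr ⟨rfl, rfl⟩)
        · rw [Set.mem_singleton_iff] at haVW hbVW; subst haVW; subst hbVW
          exact hab rfl
      apply hSmax T _ hsub
      intro x hxT y hyT hxy
      rw [hG']
      refine ⟨hT hxT hyT hxy, ?_, ?_, ?_⟩
      · intro h; exact hUT (h ▸ hxT)
      · intro h; exact hUT (h ▸ hyT)
      · rintro (⟨rfl, rfl⟩ | ⟨rfl, rfl⟩)
        · exact hnotboth ⟨hxT, hyT⟩
        · exact hnotboth ⟨hyT, hxT⟩
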